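/- Let A be a reduced commutative ring and f ∈ A a nonzerodivisor. Then the sequence of A-modules 0 → MO(A, f) → MO(A[t], f) ⊕ MO(A[u], f·u) → MO(A[t, t⁻¹], f) → 0 is exact. Here A[t] and A[u] are polynomial rings in one variable, A[t,t⁻¹] is the Laurent polynomial ring; the first map is x ↦ (x, x) induced by the inclusions A → A[t] and A → A[u]; the second map is (p, q) ↦ p − q*, where p ∈ MO(A[t],f) maps to MO(A[t,t⁻¹], f) via the inclusion A[t] → A[t,t⁻¹], and q ∈ MO(A[u], f·u) maps to q* ∈ MO(A[t,t⁻¹], f) via the ring map A[u] → A[t,t⁻¹] sending u to t⁻¹ (this map carries f·u to f·t⁻¹, which divides f, so it induces a map on MO by functoriality). -/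

import Mathlib

/-- `MO(R,g)`: the subset of the localization `L` (with localization map `ι : R →+* L`)
consisting of those `x` with `ι g * x = ι a` for some `a` in the radical of `(g)`. -/
def MOset {A L : Type*} [CommRing A] [CommRing L] (ι : A →+* L) (f : A) : Set L :=
  {x | ∃ a ∈ (Ideal.span {f}).radical, ι a = ι f * x}

/-- The Laurent polynomial ring `A[t,t⁻¹]`, modeled as the localization of `A[t]`
away from `t`. -/
abbrev Laurent (A : Type*) [CommRing A] : Type _ :=
  Localization.Away (Polynomial.X : Polynomial A)

/-- The ring map `A[u] → A[t,t⁻¹]` sending `u ↦ t⁻¹` (and `a ↦ a` for `a ∈ A`). -/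
noncomputable def uToTinv (A : Type*) [CommRing A] : Polynomial A →+* Laurent A :=
  Polynomial.eval₂RingHom
    ((algebraMap (Polynomial A) (Laurent A)).comp (Polynomial.C : A →+* Polynomial A))
    (IsLocalization.Away.invSelf (S := Laurent A) (Polynomial.X : Polynomial A))


open Polynomial

section Pre
variable {A : Type*} [CommRing A]

lemma rad_map {B : Type*} [CommRing B] (φ : A →+* B) {g a : A}
    (h : a ∈ (Ideal.span {g}).radical) : φ a ∈ (Ideal.span {φ g}).radical := by
  obtain ⟨n, hn⟩ := h
  rw [Ideal.mem_span_singleton] at hn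
  obtain ⟨c, hc⟩ := hn
  exact ⟨n, Ideal.mem_span_singleton.mpr ⟨φ c, by rw [← map_pow, hc, map_mul]⟩⟩

lemma rad_succ {I : Ideal A} {a : A} (h : a ∈ I.radical) : ∃ n : ℕ, a ^ (n + 1) ∈ I := by
  obtain ⟨n, hn⟩ := h
  exact ⟨n, by rw [pow_succ]; exact I.mul_mem_right a hn⟩

lemma coeff_mem_of_mem_radical_C {f : A} {P : A[X]}
    (h : P ∈ (Ideal.span {C f}).radical) (i : ℕ) :
    P.coeff i ∈ (Ideal.span {f}).radical := by
  set J := (Ideal.span {f}).radical with hJ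
  haveI hred : IsReduced (A ⧸ J) :=
    (Ideal.isRadical_iff_quotient_reduced J).mp (Ideal.span {f}).radical_isRadical
  obtain ⟨n, hn⟩ := h
  rw [Ideal.mem_span_singleton] at hn
  obtain ⟨c, hc⟩ := hn
  have hf0 : Ideal.Quotient.mk J f = 0 :=
    Ideal.Quotient.eq_zero_iff_mem.mpr (Ideal.le_radical (Ideal.mem_span_singleton_self f))
  have hnil : (P.map (Ideal.Quotient.mk J)) ^ n = 0 := by
    rw [← Polynomial.map_pow, hc, Polynomial.map_mul, Polynomial.map_C, hf0, map_zero, zero_mul]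
  have h0 : IsNilpotent ((P.map (Ideal.Quotient.mk J)).coeff i) :=
    Polynomial.isNilpotent_iff.mp ⟨n, hnil⟩ i
  have h1 : (P.map (Ideal.Quotient.mk J)).coeff i = 0 := IsReduced.eq_zero _ h0
  rw [Polynomial.coeff_map] at h1
  exact Ideal.Quotient.eq_zero_iff_mem.mp h1

lemma mem_radical_C_of_coeff {f : A} {P : A[X]}
    (h : ∀ i, P.coeff i ∈ (Ideal.span {f}).radical) :
    P ∈ (Ideal.span {C f}).radical := by
  nth_rewrite 1 [← P.sum_C_mul_X_pow_eq]
  rw [Polynomial.sum]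
  exact Ideal.sum_mem _ fun i _ =>
    Ideal.mul_mem_right _ _ (rad_map (C : A →+* A[X]) (h i))

lemma mem_radical_CX_iff [IsReduced A] {f : A} {Q : A[X]} :
    Q ∈ (Ideal.span {C f * X}).radical ↔
      Q.coeff 0 = 0 ∧ ∀ i, Q.coeff i ∈ (Ideal.span {f}).radical := by
  rw [show Ideal.span {C f * X} = Ideal.span {(C f : A[X])} * Ideal.span {X} from
    (Ideal.span_singleton_mul_span_singleton _ _).symm, Ideal.radical_mul, Ideal.mem_inf]
  constructor
  · rintro ⟨h1, h2⟩
    refine ⟨?_, fun i => coeff_mem_of_mem_radical_C h1 i⟩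
    obtain ⟨n, hn⟩ := h2
    rw [Ideal.mem_span_singleton] at hn
    have : IsNilpotent (Q.coeff 0) := by
      refine ⟨n, ?_⟩
      have := congrArg (fun p => Polynomial.coeff p 0) (hn.choose_spec)
      simpa [Polynomial.coeff_zero_eq_eval_zero, ← Polynomial.eval_pow] using
        congrArg (Polynomial.eval 0) hn.choose_spec
    exact IsReduced.eq_zero _ this
  · rintro ⟨h0, hc⟩
    refine ⟨mem_radical_C_of_coeff hc, Ideal.le_radical ?_⟩
    rw [Ideal.mem_span_singleton]
    exact Polynomial.X_dvd_iff.mpr h0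

lemma reflect_reflect (m : ℕ) (Q : A[X]) : (Q.reflect m).reflect m = Q := by
  ext i
  simp [Polynomial.coeff_reflect, Polynomial.revAt_invol]

lemma natDegree_reflect_le {m : ℕ} {Q : A[X]} (h : Q.natDegree ≤ m) :
    (Q.reflect m).natDegree ≤ m := by
  refine natDegree_le_iff_coeff_eq_zero.mpr fun j hj => ?_
  rw [Polynomial.coeff_reflect, Polynomial.revAt_eq_self_of_lt hj]
  exact natDegree_le_iff_coeff_eq_zero.mp h j hj

lemma eval₂_mul_pow_reflect {B : Type*} [CommRing B] (c : A →+* B) (τ σ : B)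
    (h : τ * σ = 1) (Q : A[X]) (m : ℕ) (hm : Q.natDegree ≤ m) :
    Polynomial.eval₂ c σ Q * τ ^ m = Polynomial.eval₂ c τ (Q.reflect m) := by
  letI : Invertible τ := ⟨σ, by rw [mul_comm]; exact h, h⟩
  have hd : (Q.reflect m).natDegree ≤ m := natDegree_reflect_le hm
  have := Polynomial.eval₂_reflect_mul_pow c τ m (Q.reflect m) hd
  rw [_root_.reflect_reflect] at this
  exact this

end Pre

set_option maxHeartbeats 1000000

/-- for `A` reduced and `f ∈ A` a nonzerodivisor, the sequence of
`A`-modules `0 → MO(A,f) → MO(A[t],f) ⊕ MO(A[u], f·u) → MO(A[t,t⁻¹], f) → 0` is exact.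
Here `α, β, γ, δ` are the (unique) localized ring maps induced by, respectively, the
inclusions `A → A[t]`, `A → A[u]`, `A[t] → A[t,t⁻¹]` and the map `A[u] → A[t,t⁻¹]`,
`u ↦ t⁻¹`; the first map is `x ↦ (α x, β x)` and the second is `(p,q) ↦ γ p - δ q`. -/
theorem stmt9 {A : Type*} [CommRing A] [IsReduced A] (f : A)
    (hf : f ∈ nonZeroDivisors A)
    (α : Localization.Away f →+* Localization.Away (Polynomial.C f : Polynomial A))
    (hα : α.comp (algebraMap A (Localization.Away f)) =
      (algebraMap (Polynomial A) (Localization.Away (Polynomial.C f))).comp Polynomial.C)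
    (β : Localization.Away f →+*
      Localization.Away (Polynomial.C f * Polynomial.X : Polynomial A))
    (hβ : β.comp (algebraMap A (Localization.Away f)) =
      (algebraMap (Polynomial A)
        (Localization.Away (Polynomial.C f * Polynomial.X))).comp Polynomial.C)
    (γ : Localization.Away (Polynomial.C f : Polynomial A) →+*
      Localization.Away (algebraMap (Polynomial A) (Laurent A) (Polynomial.C f)))
    (hγ : γ.comp (algebraMap (Polynomial A) (Localization.Away (Polynomial.C f))) =
      (algebraMap (Laurent A)
        (Localization.Away (algebraMap (Polynomial A) (Laurent A) (Polynomial.C f)))).comp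
          (algebraMap (Polynomial A) (Laurent A)))
    (δ : Localization.Away (Polynomial.C f * Polynomial.X : Polynomial A) →+*
      Localization.Away (algebraMap (Polynomial A) (Laurent A) (Polynomial.C f)))
    (hδ : δ.comp (algebraMap (Polynomial A)
        (Localization.Away (Polynomial.C f * Polynomial.X))) =
      (algebraMap (Laurent A)
        (Localization.Away (algebraMap (Polynomial A) (Laurent A) (Polynomial.C f)))).comp
          (uToTinv A)) :
    -- the sequence is well defined:
    Set.MapsTo α (MOset (algebraMap A (Localization.Away f)) f)
      (MOset (algebraMap (Polynomial A) (Localization.Away (Polynomial.C f)))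
        (Polynomial.C f)) ∧
    Set.MapsTo β (MOset (algebraMap A (Localization.Away f)) f)
      (MOset (algebraMap (Polynomial A)
          (Localization.Away (Polynomial.C f * Polynomial.X)))
        (Polynomial.C f * Polynomial.X)) ∧
    Set.MapsTo γ
      (MOset (algebraMap (Polynomial A) (Localization.Away (Polynomial.C f)))
        (Polynomial.C f))
      (MOset (algebraMap (Laurent A)
          (Localization.Away (algebraMap (Polynomial A) (Laurent A) (Polynomial.C f))))
        (algebraMap (Polynomial A) (Laurent A) (Polynomial.C f))) ∧
    Set.MapsTo δ
      (MOset (algebraMap (Polynomial A)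
          (Localization.Away (Polynomial.C f * Polynomial.X)))
        (Polynomial.C f * Polynomial.X))
      (MOset (algebraMap (Laurent A)
          (Localization.Away (algebraMap (Polynomial A) (Laurent A) (Polynomial.C f))))
        (algebraMap (Polynomial A) (Laurent A) (Polynomial.C f))) ∧
    -- exactness at `MO(A,f)`: the map `x ↦ (α x, β x)` is injective:
    (∀ x ∈ MOset (algebraMap A (Localization.Away f)) f,
      ∀ y ∈ MOset (algebraMap A (Localization.Away f)) f,
        α x = α y → β x = β y → x = y) ∧
    -- exactness in the middle: `(p,q)` is killed by `(p,q) ↦ γ p - δ q` iff it comes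
    -- from some `x ∈ MO(A,f)`:
    (∀ p ∈ MOset (algebraMap (Polynomial A) (Localization.Away (Polynomial.C f)))
        (Polynomial.C f),
      ∀ q ∈ MOset (algebraMap (Polynomial A)
          (Localization.Away (Polynomial.C f * Polynomial.X)))
        (Polynomial.C f * Polynomial.X),
        (γ p = δ q ↔
          ∃ x ∈ MOset (algebraMap A (Localization.Away f)) f, α x = p ∧ β x = q)) ∧
    -- exactness at the right: `(p,q) ↦ γ p - δ q` is surjective onto `MO(A[t,t⁻¹],f)`:
    (∀ z ∈ MOset (algebraMap (Laurent A)
        (Localization.Away (algebraMap (Polynomial A) (Laurent A) (Polynomial.C f))))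
        (algebraMap (Polynomial A) (Laurent A) (Polynomial.C f)),
      ∃ p ∈ MOset (algebraMap (Polynomial A) (Localization.Away (Polynomial.C f)))
          (Polynomial.C f),
        ∃ q ∈ MOset (algebraMap (Polynomial A)
            (Localization.Away (Polynomial.C f * Polynomial.X)))
          (Polynomial.C f * Polynomial.X),
          γ p - δ q = z) := by
  classical
  have hCf : (C f : A[X]) ∈ nonZeroDivisors (A[X]) :=
    Polynomial.mem_nonZeroDivisors_of_leadingCoeff (by rwa [leadingCoeff_C])
  have hX : (X : A[X]) ∈ nonZeroDivisors (A[X]) := Polynomial.monic_X.mem_nonZeroDivisors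
  have hCfX : (C f * X : A[X]) ∈ nonZeroDivisors (A[X]) := mul_mem hCf hX
  have hα' : ∀ a : A, α (algebraMap A (Localization.Away f) a) =
      algebraMap (Polynomial A) (Localization.Away (C f : Polynomial A)) (C a) :=
    fun a => RingHom.congr_fun hα a
  have hβ' : ∀ a : A, β (algebraMap A (Localization.Away f) a) =
      algebraMap (Polynomial A) (Localization.Away (C f * X : Polynomial A)) (C a) :=
    fun a => RingHom.congr_fun hβ a
  have hγ' : ∀ S : Polynomial A,
      γ (algebraMap (Polynomial A) (Localization.Away (C f : Polynomial A)) S) =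
      algebraMap (Laurent A)
        (Localization.Away (algebraMap (Polynomial A) (Laurent A) (C f)))
        (algebraMap (Polynomial A) (Laurent A) S) :=
    fun S => RingHom.congr_fun hγ S
  have hδ' : ∀ S : Polynomial A,
      δ (algebraMap (Polynomial A) (Localization.Away (C f * X : Polynomial A)) S) =
      algebraMap (Laurent A)
        (Localization.Away (algebraMap (Polynomial A) (Laurent A) (C f)))
        (uToTinv A S) :=
    fun S => RingHom.congr_fun hδ S
  clear hα hβ hγ hδ
  set ιA := algebraMap A (Localization.Away f) with hιA
  set ιt := algebraMap (Polynomial A) (Localization.Away (C f : Polynomial A)) with hιt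
  set ιu := algebraMap (Polynomial A)
    (Localization.Away (C f * X : Polynomial A)) with hιu
  set ιM := algebraMap (Laurent A)
    (Localization.Away (algebraMap (Polynomial A) (Laurent A) (C f))) with hιM
  set ψ := ιM.comp (algebraMap (Polynomial A) (Laurent A)) with hψ
  set τ := ψ (X : A[X]) with hτ
  set σ := ιM (IsLocalization.Away.invSelf (S := Laurent A) (X : A[X])) with hσ
  -- injectivity of the various localization maps
  have hι0inj : Function.Injective (algebraMap (Polynomial A) (Laurent A)) :=
    IsLocalization.injective _ (Submonoid.powers_le.mpr hX)
  have hι0Cf : algebraMap (Polynomial A) (Laurent A) (C f) ∈ nonZeroDivisors (Laurent A) :=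
    IsLocalization.map_nonZeroDivisors_le (Submonoid.powers (X : A[X])) (Laurent A)
      ⟨C f, hCf, rfl⟩
  have hιMinj : Function.Injective ιM :=
    IsLocalization.injective _ (Submonoid.powers_le.mpr hι0Cf)
  have hιtinj : Function.Injective ιt :=
    IsLocalization.injective _ (Submonoid.powers_le.mpr hCf)
  have hψinj : Function.Injective ψ := hιMinj.comp hι0inj
  -- units
  have huf : IsUnit (ιA f) := IsLocalization.Away.algebraMap_isUnit f
  have hut : IsUnit (ιt (C f)) := IsLocalization.Away.algebraMap_isUnit (C f : A[X])
  have huu : IsUnit (ιu (C f * X)) :=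
    IsLocalization.Away.algebraMap_isUnit (C f * X : A[X])
  have huM : IsUnit (ψ (C f)) :=
    IsLocalization.Away.algebraMap_isUnit (algebraMap (Polynomial A) (Laurent A) (C f))
  have hτσ : τ * σ = 1 := by
    rw [hτ, hσ, hψ, RingHom.comp_apply, ← map_mul,
      IsLocalization.Away.mul_invSelf, map_one]
  have huτ : IsUnit τ := isUnit_iff_exists_inv.mpr ⟨σ, hτσ⟩
  -- uToTinv computations
  have huC : ∀ S : A[X], uToTinv A S =
      Polynomial.eval₂ ((algebraMap (Polynomial A) (Laurent A)).comp (C : A →+* A[X]))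
        (IsLocalization.Away.invSelf (S := Laurent A) (X : A[X])) S := fun S => by
    rw [uToTinv, coe_eval₂RingHom]
  have hψ'def : ∀ S : A[X], ιM (uToTinv A S) = Polynomial.eval₂ (ψ.comp C) σ S := by
    intro S
    rw [huC S, Polynomial.hom_eval₂]
    rfl
  have hψdef : ∀ S : A[X], ψ S = Polynomial.eval₂ (ψ.comp C) τ S := by
    intro S
    conv_lhs => rw [← Polynomial.eval₂_C_X (p := S)]
    rw [Polynomial.hom_eval₂]
  have hδ'' : ∀ S : A[X], δ (ιu S) = Polynomial.eval₂ (ψ.comp C) σ S := fun S => by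
    rw [hδ' S, hψ'def S]
  have hevalC : ∀ a : A, Polynomial.eval₂ (ψ.comp C) σ (C a) = ψ (C a) := fun a => by
    rw [Polynomial.eval₂_C]; rfl
  have huCa : ∀ a : A, uToTinv A (C a) = algebraMap (Polynomial A) (Laurent A) (C a) :=
    fun a => by rw [huC, Polynomial.eval₂_C, RingHom.comp_apply]
  have huXX : uToTinv A X =
      IsLocalization.Away.invSelf (S := Laurent A) (X : A[X]) := by
    rw [huC, Polynomial.eval₂_X]
  refine ⟨?_, ?_, ?_, ?_, ?_, ?_, ?_⟩
  · -- MapsTo α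
    rintro x ⟨a, ha, hax⟩
    refine ⟨C a, rad_map (C : A →+* A[X]) ha, ?_⟩
    calc ιt (C a) = α (ιA a) := (hα' a).symm
      _ = α (ιA f) * α x := by rw [hax, map_mul]
      _ = ιt (C f) * α x := by rw [hα' f]
  · -- MapsTo β
    rintro x ⟨a, ha, hax⟩
    refine ⟨C a * X, ?_, ?_⟩
    · refine mem_radical_CX_iff.mpr ⟨by simp, fun i => ?_⟩
      rcases eq_or_ne i 1 with rfl | h
      · simpa using ha
      · rw [coeff_C_mul, coeff_X, if_neg (fun hh => h hh.symm), mul_zero]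
        exact Ideal.zero_mem _
    · calc ιu (C a * X) = β (ιA a) * ιu X := by rw [map_mul, hβ' a]
        _ = β (ιA f) * β x * ιu X := by rw [hax, map_mul]
        _ = ιu (C f * X) * β x := by rw [hβ' f, map_mul]; ring
  · -- MapsTo γ
    rintro p ⟨P, hP, eP⟩
    refine ⟨algebraMap (Polynomial A) (Laurent A) P,
      rad_map (algebraMap (Polynomial A) (Laurent A)) hP, ?_⟩
    calc ιM (algebraMap (Polynomial A) (Laurent A) P) = γ (ιt P) := (hγ' P).symm
      _ = γ (ιt (C f)) * γ p := by rw [eP, map_mul]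
      _ = ιM (algebraMap (Polynomial A) (Laurent A) (C f)) * γ p := by rw [hγ' (C f)]
  · -- MapsTo δ
    rintro q ⟨Q, hQ, eQ⟩
    obtain ⟨n, hn⟩ := rad_succ hQ
    rw [Ideal.mem_span_singleton] at hn
    obtain ⟨W, hW⟩ := hn
    refine ⟨algebraMap (Polynomial A) (Laurent A) X * uToTinv A Q, ?_, ?_⟩
    · refine ⟨n + 1, Ideal.mem_span_singleton.mpr
        ⟨algebraMap (Polynomial A) (Laurent A) (X ^ (n + 1)) *
          IsLocalization.Away.invSelf (S := Laurent A) (X : A[X]) * uToTinv A W, ?_⟩⟩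
      rw [mul_pow, ← map_pow, ← map_pow (uToTinv A), hW, map_mul (uToTinv A),
        map_mul (uToTinv A), huCa f, huXX]
      ring
    · have h2 : ιM (uToTinv A Q) =
          ιM (algebraMap (Polynomial A) (Laurent A) (C f)) * σ * δ q := by
        have h3 := congrArg δ eQ
        rw [map_mul, hδ' Q, hδ' (C f * X)] at h3
        rw [h3, map_mul (uToTinv A), huCa f, huXX, map_mul, hσ]
      rw [map_mul, h2]
      have hτ' : ιM (algebraMap (Polynomial A) (Laurent A) X) = τ := rfl
      rw [hτ']
      linear_combination (ιM (algebraMap (Polynomial A) (Laurent A) (C f)) * δ q) * hτσ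
  · -- injectivity
    intro x _ y _ hxy _
    obtain ⟨n, a, hna⟩ := IsLocalization.Away.surj (S := Localization.Away f) f x
    obtain ⟨m, b, hmb⟩ := IsLocalization.Away.surj (S := Localization.Away f) f y
    have h1 : α x * ιt (C f) ^ n = ιt (C a) := by
      have h := congrArg α hna
      rw [map_mul, map_pow, hα' f, hα' a] at h
      exact h
    have h2 : α y * ιt (C f) ^ m = ιt (C b) := by
      have h := congrArg α hmb
      rw [map_mul, map_pow, hα' f, hα' b] at h
      exact h
    have e1 : ιt (C a * C f ^ m) = ιt (C b * C f ^ n) := by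
      rw [map_mul, map_pow, map_mul, map_pow, ← h1, ← h2, hxy]
      ring
    have e2 : a * f ^ m = b * f ^ n := by
      have := hιtinj e1
      rw [← C_pow, ← C_mul, ← C_pow, ← C_mul] at this
      exact C_injective this
    have e4 : ιA a * ιA f ^ m = ιA b * ιA f ^ n := by
      rw [← map_pow, ← map_mul, ← map_pow, ← map_mul, e2]
    refine (huf.pow (n + m)).mul_left_cancel ?_
    linear_combination ιA f ^ m * hna - ιA f ^ n * hmb + e4
  · -- middle exactness
    rintro p ⟨P, hP, eP⟩ q ⟨Q, hQ, eQ⟩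
    obtain ⟨hQ0, hQc⟩ := mem_radical_CX_iff.mp hQ
    have hx1 : ∀ a : A, ιA f * (↑huf.unit⁻¹ * ιA a) = ιA a := fun a => by
      have h := Units.mul_inv_cancel_left huf.unit (ιA a)
      rwa [huf.unit_spec] at h
    constructor
    · intro hγδ
      have e1 : ψ (C f) * γ p = ψ P := by
        have h := congrArg γ eP
        rw [map_mul, hγ' (C f), hγ' P] at h
        exact h.symm
      have e2 : ψ (C f) * σ * δ q = Polynomial.eval₂ (ψ.comp C) σ Q := by
        have h := congrArg δ eQ
        rw [map_mul, hδ'' (C f * X), hδ'' Q,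
          Polynomial.eval₂_mul, Polynomial.eval₂_C, Polynomial.eval₂_X,
          RingHom.comp_apply] at h
        exact h.symm
      set d := Q.natDegree with hd
      have hE : Polynomial.eval₂ (ψ.comp C) σ Q * τ ^ d = ψ (Q.reflect d) := by
        rw [eval₂_mul_pow_reflect (ψ.comp C) τ σ hτσ Q d le_rfl, ← hψdef]
      have key : ψ (P * X ^ d) = ψ (Q.reflect d * X) := by
        rw [map_mul, map_pow, map_mul, ← hτ]
        linear_combination (-(τ^d)) * e1 + τ * hE + (τ^d * ψ (C f)) * hγδ
          + (τ^(d+1)) * e2 - (ψ (C f) * δ q * τ^d) * hτσ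
      have EE : P * X ^ d = Q.reflect d * X := hψinj key
      set a := P.coeff 0 with ha_def
      have ha : a ∈ (Ideal.span {f}).radical := coeff_mem_of_mem_radical_C hP 0
      have hP1 : ∀ i : ℕ, P.coeff (i + 1) = 0 := by
        intro i
        have h1 : (P * X ^ d).coeff (i + 1 + d) = P.coeff (i + 1) :=
          Polynomial.coeff_mul_X_pow P d (i + 1)
        rw [EE, show i + 1 + d = (i + d) + 1 from by ring, Polynomial.coeff_mul_X,
          Polynomial.coeff_reflect] at h1
        rcases Nat.eq_zero_or_pos i with rfl | hi
        · rw [zero_add, Polynomial.revAt_le (le_refl d), Nat.sub_self, hQ0] at h1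
          exact h1.symm
        · rw [Polynomial.revAt_eq_self_of_lt (by omega),
            Polynomial.coeff_eq_zero_of_natDegree_lt (by omega)] at h1
          exact h1.symm
      have hPC : P = C a := by
        ext i
        cases i with
        | zero => rw [coeff_C, if_pos rfl]
        | succ n => rw [hP1 n, coeff_C, if_neg (Nat.succ_ne_zero n)]
      have hQC : Q = C a * X := by
        rcases Nat.eq_zero_or_pos d with hd0 | hdpos
        · have hdeg0 : Q.natDegree = 0 := by omega
          have hQz : Q = 0 := by
            rw [Polynomial.eq_C_of_natDegree_eq_zero hdeg0, hQ0, map_zero]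
          have hPz : P = 0 := by
            have h2 := EE
            rw [hQz, hd0] at h2
            simpa using h2
          have haz : a = 0 := by rw [ha_def, hPz, Polynomial.coeff_zero]
          rw [hQz, haz, map_zero, zero_mul]
        · have hstep : Q.reflect d * X = (C a * X ^ (d - 1)) * X := by
            rw [← EE, hPC, mul_assoc, ← pow_succ, show d - 1 + 1 = d from by omega]
          have hrefl : Q.reflect d = C a * X ^ (d - 1) := by
            have h0 : (Q.reflect d - C a * X ^ (d - 1)) * X = 0 := by
              rw [sub_mul, hstep]; ring
            exact sub_eq_zero.mp (mem_nonZeroDivisors_iff_right.mp hX _ h0)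
          rw [← reflect_reflect d Q, hrefl, Polynomial.reflect_C_mul_X_pow,
            Polynomial.revAt_le (by omega), show d - (d - 1) = 1 from by omega, pow_one]
      refine ⟨↑huf.unit⁻¹ * ιA a, ⟨a, ha, (hx1 a).symm⟩, ?_, ?_⟩
      · refine hut.mul_left_cancel ?_
        rw [hPC] at eP
        have ha2 : α (ιA f * (↑huf.unit⁻¹ * ιA a)) = ιt (C f) * α (↑huf.unit⁻¹ * ιA a) := by
          rw [map_mul, hα' f]
        have ha3 : α (ιA f * (↑huf.unit⁻¹ * ιA a)) = ιt (C a) := by rw [hx1 a, hα' a]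
        rw [← ha2, ha3]
        exact eP
      · refine huu.mul_left_cancel ?_
        rw [hQC] at eQ
        have hb2 : β (ιA f * (↑huf.unit⁻¹ * ιA a)) = ιu (C f) * β (↑huf.unit⁻¹ * ιA a) := by
          rw [map_mul, hβ' f]
        have hb3 : β (ιA f * (↑huf.unit⁻¹ * ιA a)) = ιu (C a) := by rw [hx1 a, hβ' a]
        calc ιu (C f * X) * β (↑huf.unit⁻¹ * ιA a)
            = ιu (C f) * β (↑huf.unit⁻¹ * ιA a) * ιu X := by rw [map_mul]; ring
          _ = ιu (C a) * ιu X := by rw [← hb2, hb3]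
          _ = ιu (C f * X) * q := by rw [← map_mul]; exact eQ
    · rintro ⟨x, ⟨a, ha, hax⟩, hαx, hβx⟩
      have g1 : ψ (C f) * γ p = ψ (C a) := by
        have h : ιt (C f) * p = ιt (C a) := by
          calc ιt (C f) * p = α (ιA f * x) := by rw [← hαx, ← hα' f, ← map_mul]
            _ = ιt (C a) := by rw [← hax, hα' a]
        have h2 := congrArg γ h
        rw [map_mul, hγ' (C f), hγ' (C a)] at h2
        exact h2
      have g2 : ψ (C f) * σ * δ q = ψ (C a) * σ := by
        have h : ιu (C a * X) = ιu (C f * X) * q := by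
          calc ιu (C a * X) = β (ιA a) * ιu X := by rw [map_mul, hβ' a]
            _ = β (ιA f) * β x * ιu X := by rw [hax, map_mul]
            _ = ιu (C f * X) * q := by rw [hβ' f, map_mul, hβx]; ring
        have h2 := congrArg δ h
        rw [hδ'' (C a * X), map_mul, hδ'' (C f * X),
          Polynomial.eval₂_mul, Polynomial.eval₂_mul, Polynomial.eval₂_C,
          Polynomial.eval₂_C, Polynomial.eval₂_X,
          RingHom.comp_apply, RingHom.comp_apply] at h2
        exact h2.symm
      refine huM.mul_left_cancel ?_
      linear_combination g1 - τ * g2 - (ψ (C a) - ψ (C f) * δ q) * hτσ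
  · -- surjectivity
    rintro z ⟨L, hL, eL⟩
    obtain ⟨m, R, hR⟩ := IsLocalization.Away.surj (S := Laurent A) (X : A[X]) L
    have hRc : ∀ i, R.coeff i ∈ (Ideal.span {f}).radical := by
      obtain ⟨n, hn⟩ := rad_succ hL
      rw [Ideal.mem_span_singleton] at hn
      obtain ⟨w, hw⟩ := hn
      obtain ⟨k, W, hWk⟩ := IsLocalization.Away.surj (S := Laurent A) (X : A[X]) w
      have hRp := congrArg (fun y => y ^ (n + 1)) hR
      have hpoly : R ^ (n + 1) * X ^ k = C f * W * X ^ (m * (n + 1)) := by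
        apply hι0inj
        rw [map_mul, map_pow, map_pow, map_mul, map_mul, map_pow]
        linear_combination (-((algebraMap (Polynomial A) (Laurent A)) X ^ k)) * hRp
          + ((algebraMap (Polynomial A) (Laurent A)) X ^ (m * (n + 1) + k)) * hw
          + ((algebraMap (Polynomial A) (Laurent A)) (C f) *
              (algebraMap (Polynomial A) (Laurent A)) X ^ (m * (n + 1))) * hWk
      have hRX : (R * X : A[X]) ∈ (Ideal.span {C f}).radical := by
        refine ⟨n + 1 + k, Ideal.mem_span_singleton.mpr
          ⟨W * X ^ (m * (n + 1)) * (R ^ k * X ^ (n + 1)), ?_⟩⟩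
        rw [mul_pow, pow_add, pow_add]
        linear_combination (R ^ k * X ^ (n + 1)) * hpoly
      intro i
      have h3 := coeff_mem_of_mem_radical_C hRX (i + 1)
      rwa [Polynomial.coeff_mul_X] at h3
    set P := ∑ i ∈ Finset.range (R.natDegree + 1),
      (Polynomial.monomial i) (R.coeff (m + i)) with hPdef
    set Q := -∑ i ∈ Finset.range m,
      (Polynomial.monomial (m + 1 - i)) (R.coeff i) with hQdef
    have hPco : ∀ j, P.coeff j = R.coeff (m + j) := by
      intro j
      rw [hPdef, Polynomial.finset_sum_coeff]
      by_cases hj : j ≤ R.natDegree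
      · rw [Finset.sum_eq_single j (fun b _ hb => by
            rw [Polynomial.coeff_monomial, if_neg hb])
          (fun hj2 => absurd (Finset.mem_range.mpr (by omega)) hj2),
          Polynomial.coeff_monomial, if_pos rfl]
      · exact (Finset.sum_eq_zero (fun b hb => by
          rw [Finset.mem_range] at hb
          rw [Polynomial.coeff_monomial, if_neg (by omega)])).trans
          (Polynomial.coeff_eq_zero_of_natDegree_lt (by omega)).symm
    have hQco : ∀ j, Q.coeff j =
        if 2 ≤ j ∧ j ≤ m + 1 then -R.coeff (m + 1 - j) else 0 := by
      intro j
      rw [hQdef, Polynomial.coeff_neg, Polynomial.finset_sum_coeff]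
      by_cases hj : 2 ≤ j ∧ j ≤ m + 1
      · rw [if_pos hj, Finset.sum_eq_single (m + 1 - j) (fun b hb hbne => by
            rw [Finset.mem_range] at hb
            rw [Polynomial.coeff_monomial, if_neg (by omega)])
          (fun hmem => absurd (Finset.mem_range.mpr (by omega)) hmem),
          Polynomial.coeff_monomial, if_pos (by omega)]
      · rw [if_neg hj, Finset.sum_eq_zero (fun b hb => by
          rw [Finset.mem_range] at hb
          rw [Polynomial.coeff_monomial, if_neg (by omega)]), neg_zero]
    have hQ0 : Q.coeff 0 = 0 := by rw [hQco 0, if_neg (by omega)]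
    have hQrad : Q ∈ (Ideal.span {C f * X}).radical :=
      mem_radical_CX_iff.mpr ⟨hQ0, fun i => by
        rw [hQco i]
        split_ifs with h
        · exact neg_mem (hRc _)
        · exact Ideal.zero_mem _⟩
    have hPrad : P ∈ (Ideal.span {C f}).radical :=
      mem_radical_C_of_coeff (fun i => by rw [hPco i]; exact hRc _)
    have hQdeg : Q.natDegree ≤ m + 1 :=
      natDegree_le_iff_coeff_eq_zero.mpr (fun N hN => by rw [hQco N, if_neg (by omega)])
    have hx1t : ιt (C f) * (↑hut.unit⁻¹ * ιt P) = ιt P := by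
      have h := Units.mul_inv_cancel_left hut.unit (ιt P)
      rwa [hut.unit_spec] at h
    have hx1u : ιu (C f * X) * (↑huu.unit⁻¹ * ιu Q) = ιu Q := by
      have h := Units.mul_inv_cancel_left huu.unit (ιu Q)
      rwa [huu.unit_spec] at h
    refine ⟨↑hut.unit⁻¹ * ιt P, ⟨P, hPrad, hx1t.symm⟩,
      ↑huu.unit⁻¹ * ιu Q, ⟨Q, hQrad, hx1u.symm⟩, ?_⟩
    refine (huM.mul (huτ.pow m)).mul_left_cancel ?_
    have F1 : ψ (C f) * γ (↑hut.unit⁻¹ * ιt P) = ψ P := by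
      have h := congrArg γ hx1t
      rw [map_mul, hγ' (C f), hγ' P] at h
      exact h
    have F2 : ψ (C f) * σ * δ (↑huu.unit⁻¹ * ιu Q) = Polynomial.eval₂ (ψ.comp C) σ Q := by
      have h := congrArg δ hx1u
      rw [map_mul, hδ'' (C f * X), hδ'' Q,
        Polynomial.eval₂_mul, Polynomial.eval₂_C, Polynomial.eval₂_X,
        RingHom.comp_apply] at h
      exact h
    have F3 : Polynomial.eval₂ (ψ.comp C) σ Q * τ ^ (m + 1) = ψ (Q.reflect (m + 1)) := by
      rw [eval₂_mul_pow_reflect (ψ.comp C) τ σ hτσ Q (m + 1) hQdeg, ← hψdef]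
    have hpoly2 : P * X ^ m - Q.reflect (m + 1) = R := by
      ext j
      rw [Polynomial.coeff_sub, Polynomial.coeff_mul_X_pow', Polynomial.coeff_reflect]
      by_cases hj : m ≤ j
      · rw [if_pos hj, hPco (j - m), show m + (j - m) = j from by omega]
        have hz : Q.coeff ((Polynomial.revAt (m + 1)) j) = 0 := by
          by_cases hj2 : j ≤ m + 1
          · rw [Polynomial.revAt_le hj2, hQco, if_neg (by omega)]
          · rw [Polynomial.revAt_eq_self_of_lt (by omega), hQco, if_neg (by omega)]
        rw [hz, sub_zero]
      · rw [if_neg hj, Polynomial.revAt_le (by omega : j ≤ m + 1), hQco,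
          if_pos (⟨by omega, by omega⟩ : 2 ≤ m + 1 - j ∧ m + 1 - j ≤ m + 1),
          show m + 1 - (m + 1 - j) = j from by omega]
        ring
    have F4 : ψ R = ψ (C f) * z * τ ^ m := by
      have h := congrArg ιM hR
      rw [map_mul, map_pow, eL] at h
      exact h.symm
    have F5 : ψ P * τ ^ m - ψ (Q.reflect (m + 1)) = ψ R := by
      rw [← hpoly2, map_sub, map_mul, map_pow, ← hτ]
    linear_combination (τ^m) * F1 + F5 + F4 - (τ^(m+1)) * F2 - F3
      + (ψ (C f) * δ (↑huu.unit⁻¹ * ιu Q) * τ^m) * hτσ
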